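/- Let p be an odd integer with p ≥ 5. Then the Turán number ex(p+6, B_p) equals (p+3)(p+5)/2. -/

import Mathlib

open SimpleGraph

/-- A graph contains the book `B_p` iff some edge has at least `p` common neighbors. -/
def SimpleGraph.ContainsBook {V : Type*} (G : SimpleGraph V) (p : ℕ) : Prop :=
  ∃ x y, G.Adj x y ∧ p ≤ (G.commonNeighbors x y).ncard

/-- The Turán number `ex(n, B_p)`: the maximum number of edges of a simple graph
on `n` vertices containing no book `B_p`. -/
noncomputable def bookTuranNumber (n p : ℕ) : ℕ :=
  sSup {e : ℕ | ∃ G : SimpleGraph (Fin n), ¬ G.ContainsBook p ∧ G.edgeSet.ncard = e}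

/-- The disjoint union of `m` copies of the complete graph `K_k`. -/
def unionComplete (m k : ℕ) : SimpleGraph (Fin m × Fin k) :=
  SimpleGraph.fromRel fun a b => a.1 = b.1

/-- The join `G ∨ H` of two graphs. -/
def SimpleGraph.join {α β : Type*} (G : SimpleGraph α) (H : SimpleGraph β) :
    SimpleGraph (α ⊕ β) := (Gᶜ ⊕g Hᶜ)ᶜ

/-- A disjoint union of cycles `C_{i 0} + ⋯ + C_{i (t-1)}`. -/
def cycleFamily (t : ℕ) (i : Fin t → ℕ) : SimpleGraph (Σ j : Fin t, Fin (i j)) :=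
  SimpleGraph.fromRel fun a b => ∃ h : a.1 = b.1, (SimpleGraph.cycleGraph (i b.1)).Adj (h ▸ a.2) b.2

open Finset


lemma card_edge_compl {V} [Fintype V] [DecidableEq V] (G : SimpleGraph V) [DecidableRel G.Adj] :
    #G.edgeFinset + #Gᶜ.edgeFinset = (Fintype.card V).choose 2 := by
  classical
  rw [← card_edgeFinset_top_eq_card_choose_two,
    ← card_union_of_disjoint (disjoint_edgeFinset.mpr disjoint_compl_right)]
  congr 1
  ext e
  induction e using Sym2.ind with
  | _ x y =>
    simp only [Finset.mem_union, mem_edgeFinset, mem_edgeSet, compl_adj, top_adj]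
    constructor
    · rintro (h | ⟨h, -⟩) <;> [exact h.ne; exact h]
    · intro h; by_cases hA : G.Adj x y <;> tauto


lemma degsum_lower (n : ℕ) (hn : 11 ≤ n) (H : SimpleGraph (Fin n)) [DecidableRel H.Adj]
    (key : ∀ x y : Fin n, x ≠ y → ¬H.Adj x y →
      5 ≤ #((H.neighborFinset x ∪ H.neighborFinset y) \ {x, y})) :
    3 * (n - 1) ≤ ∑ v, H.degree v := by
  classical
  have key2 : ∀ x y : Fin n, x ≠ y → ¬H.Adj x y → 5 ≤ H.degree x + H.degree y := by
    intro x y hxy hadj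
    calc 5 ≤ #((H.neighborFinset x ∪ H.neighborFinset y) \ {x, y}) := key x y hxy hadj
    _ ≤ #(H.neighborFinset x ∪ H.neighborFinset y) := card_le_card (sdiff_subset)
    _ ≤ H.degree x + H.degree y := by
        rw [← card_neighborFinset_eq_degree, ← card_neighborFinset_eq_degree]
        exact card_union_le _ _
  set S : Finset (Fin n) := univ.filter (fun v => H.degree v ≤ 2) with hS
  have hmemS : ∀ v, v ∈ S ↔ H.degree v ≤ 2 := by intro v; simp [hS]
  have hclique : ∀ a ∈ S, ∀ b ∈ S, a ≠ b → H.Adj a b := by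
    intro a ha b hb hab
    by_contra hadj
    have := key2 a b hab hadj
    rw [hmemS] at ha hb
    omega
  have hS3 : #S ≤ 3 := by
    by_contra hS4
    push_neg at hS4
    obtain ⟨a, ha⟩ : S.Nonempty := card_pos.mp (by omega)
    have hsub : S.erase a ⊆ H.neighborFinset a := by
      intro b hb
      rw [mem_neighborFinset]
      exact hclique a ha b (mem_of_mem_erase hb) (ne_of_mem_erase hb).symm
    have := card_le_card hsub
    rw [card_erase_of_mem ha, card_neighborFinset_eq_degree] at this
    have := (hmemS a).mp ha
    omega
  have hsplit : ∑ v ∈ S, H.degree v + ∑ v ∈ Sᶜ, H.degree v = ∑ v, H.degree v := by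
    rw [sum_add_sum_compl]
  have hScCard : #(Sᶜ) = n - #S := by
    rw [card_compl, Fintype.card_fin]
  have sum_lb : ∀ (s : Finset (Fin n)) (c : ℕ), (∀ v ∈ s, c ≤ H.degree v) →
      #s * c ≤ ∑ v ∈ s, H.degree v := by
    intro s c hc
    calc #s * c = ∑ _v ∈ s, c := by rw [sum_const, smul_eq_mul]
    _ ≤ _ := sum_le_sum hc
  have hSc : 3 * (n - #S) ≤ ∑ v ∈ Sᶜ, H.degree v := by
    have h3 := sum_lb Sᶜ 3 (by
      intro v hv
      rw [mem_compl, hmemS] at hv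
      omega)
    omega
  interval_cases h : #S
  · omega
  · omega
  · -- #S = 2
    obtain ⟨a, b, hab, hSab⟩ := card_eq_two.mp h
    have haS : a ∈ S := by rw [hSab]; simp
    have hbS : b ∈ S := by rw [hSab]; simp
    have hadj : H.Adj a b := hclique a haS b hbS hab
    have hda : 1 ≤ H.degree a := by
      rw [← card_neighborFinset_eq_degree]
      exact card_pos.mpr ⟨b, by rw [mem_neighborFinset]; exact hadj⟩
    have hdb : 1 ≤ H.degree b := by
      rw [← card_neighborFinset_eq_degree]
      exact card_pos.mpr ⟨a, by rw [mem_neighborFinset]; exact hadj.symm⟩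
    have hsum2 : ∑ v ∈ S, H.degree v = H.degree a + H.degree b := by
      rw [hSab, sum_pair hab]
    by_cases h3 : 3 ≤ H.degree a + H.degree b
    · omega
    · have hda1 : H.degree a = 1 := by omega
      have hNa : H.neighborFinset a = {b} :=
        (Finset.eq_of_subset_of_card_le
          (by intro z hz; rw [mem_singleton] at hz; subst hz
              rw [mem_neighborFinset]; exact hadj)
          (by rw [card_neighborFinset_eq_degree, hda1, card_singleton])).symm
      have hbig : ∀ z : Fin n, z ≠ a → z ≠ b → 4 ≤ H.degree z := by
        intro z hza hzb
        have hnadj : ¬H.Adj a z := by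
          intro hc
          have : z ∈ H.neighborFinset a := by rw [mem_neighborFinset]; exact hc
          rw [hNa, mem_singleton] at this
          exact hzb this
        have h5 := key a z (Ne.symm hza) hnadj
        have hsub : (H.neighborFinset a ∪ H.neighborFinset z) \ {a, z}
            ⊆ insert b (H.neighborFinset z) := by
          rw [hNa]
          intro w hw
          simp only [mem_sdiff, Finset.mem_union, mem_singleton, mem_insert] at hw ⊢
          tauto
        have h6 := card_le_card hsub
        have h7 := card_insert_le b (H.neighborFinset z)
        rw [card_neighborFinset_eq_degree] at h7
        omega
      have h4 : 4 * (n - 2) ≤ ∑ v ∈ Sᶜ, H.degree v := by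
        have h8 := sum_lb Sᶜ 4 (by
          intro v hv
          rw [mem_compl, hSab] at hv
          simp only [mem_insert, mem_singleton] at hv
          push_neg at hv
          exact hbig v hv.1 hv.2)
        omega
      omega
  · -- #S = 3
    obtain ⟨a, b, c, hab, hac, hbc, hSabc⟩ := card_eq_three.mp h
    have haS : a ∈ S := by rw [hSabc]; simp
    have hbS : b ∈ S := by rw [hSabc]; simp
    have hcS : c ∈ S := by rw [hSabc]; simp
    have hdeg : ∀ x ∈ S, 2 ≤ H.degree x := by
      intro x hx
      have h2 : (S.erase x) ⊆ H.neighborFinset x := by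
        intro y hy
        rw [mem_neighborFinset]
        exact hclique x hx y (mem_of_mem_erase hy) (ne_of_mem_erase hy).symm
      have := card_le_card h2
      rw [card_erase_of_mem hx, h, card_neighborFinset_eq_degree] at this
      omega
    have : 6 ≤ ∑ v ∈ S, H.degree v := by
      rw [hSabc, sum_insert (by simp [hab, hac]), sum_pair hbc]
      have := hdeg a haS; have := hdeg b hbS; have := hdeg c hcS
      omega
    omega


lemma ncard_edgeSet (V : Type*) [Fintype V] [DecidableEq V] (G : SimpleGraph V)
    [DecidableRel G.Adj] : G.edgeSet.ncard = #G.edgeFinset := by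
  rw [Set.ncard_eq_toFinset_card']
  congr 1

lemma upper_bound (p : ℕ) (hp : 5 ≤ p) (hodd : Odd p) (G : SimpleGraph (Fin (p + 6)))
    (hG : ¬ G.ContainsBook p) : G.edgeSet.ncard ≤ (p + 3) * (p + 5) / 2 := by
  classical
  have key : ∀ x y : Fin (p + 6), x ≠ y → ¬Gᶜ.Adj x y →
      5 ≤ #((Gᶜ.neighborFinset x ∪ Gᶜ.neighborFinset y) \ {x, y}) := by
    intro x y hxy hnadj
    have hadj : G.Adj x y := by
      rw [compl_adj] at hnadj
      push_neg at hnadj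
      exact hnadj hxy
    have hcn : (G.commonNeighbors x y).ncard < p := by
      by_contra hc
      exact hG ⟨x, y, hadj, le_of_not_gt hc⟩
    have hcnc : (G.commonNeighbors x y).ncard
        = #(univ.filter (fun z => G.Adj x z ∧ G.Adj y z)) := by
      rw [Set.ncard_eq_toFinset_card']
      congr 1
      ext z
      rw [Set.mem_toFinset]
      simp [commonNeighbors, mem_neighborSet]
    set C := univ.filter (fun z => G.Adj x z ∧ G.Adj y z) with hC
    set D := (Gᶜ.neighborFinset x ∪ Gᶜ.neighborFinset y) \ {x, y} with hD
    have hcover : (univ : Finset (Fin (p + 6))) ⊆ (C ∪ {x, y}) ∪ D := by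
      intro z _
      simp only [hC, hD, Finset.mem_union, mem_filter, mem_univ, true_and, mem_insert,
        mem_singleton, mem_sdiff, mem_neighborFinset, compl_adj]
      by_cases hzx : z = x
      · tauto
      by_cases hzy : z = y
      · tauto
      have h1 : x ≠ z := fun h => hzx h.symm
      have h2 : y ≠ z := fun h => hzy h.symm
      by_cases hxz : G.Adj x z
      · by_cases hyz : G.Adj y z
        · tauto
        · tauto
      · tauto
    have hcard := card_le_card hcover
    have hcu : #((C ∪ {x, y}) ∪ D) ≤ #C + 2 + #D := by
      calc #((C ∪ {x, y}) ∪ D) ≤ #(C ∪ {x, y}) + #D := card_union_le _ _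
      _ ≤ (#C + #({x, y} : Finset (Fin (p+6)))) + #D := by
          exact Nat.add_le_add_right (card_union_le _ _) _
      _ ≤ #C + 2 + #D := by
          have : #({x, y} : Finset (Fin (p+6))) ≤ 2 := card_insert_le x {y}
          omega
    rw [card_univ, Fintype.card_fin] at hcard
    omega
  have hdeg := degsum_lower (p + 6) (by omega) Gᶜ key
  have hhs : ∑ v, Gᶜ.degree v = 2 * #Gᶜ.edgeFinset := sum_degrees_eq_twice_card_edges Gᶜ
  have hcompl := card_edge_compl G
  rw [Fintype.card_fin, Nat.choose_two_right] at hcompl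
  obtain ⟨k, hk⟩ := hodd
  set t := k + 3 with ht
  have hp5 : p + 5 = 2 * t := by omega
  have e1 : (p + 6) * (p + 5) / 2 = (p + 6) * t := by
    rw [hp5, show (p+6) * (2*t) = 2 * ((p+6)*t) by ring, Nat.mul_div_cancel_left _ two_pos]
  have e2 : (p + 3) * (p + 5) / 2 = (p + 3) * t := by
    rw [hp5, show (p+3) * (2*t) = 2 * ((p+3)*t) by ring, Nat.mul_div_cancel_left _ two_pos]
  have e3 : (p + 6) * t = (p + 3) * t + 3 * t := by ring
  rw [ncard_edgeSet, e2]
  rw [show p + 6 - 1 = p + 5 from rfl, e1] at hcompl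
  omega


instance (m k : ℕ) : DecidableRel (unionComplete m k).Adj := fun a b =>
  decidable_of_iff _ (SimpleGraph.fromRel_adj _ a b).symm

lemma uc_adj {m k : ℕ} (x y : Fin m × Fin k) :
    (unionComplete m k).Adj x y ↔ x ≠ y ∧ x.1 = y.1 := by
  rw [unionComplete, SimpleGraph.fromRel_adj]
  constructor
  · rintro ⟨h, h2 | h2⟩ <;> exact ⟨h, by omega⟩
  · rintro ⟨h, h2⟩; exact ⟨h, Or.inl h2⟩

lemma uc_nbr {m k : ℕ} (x : Fin m × Fin k) :
    (unionComplete m k).neighborFinset x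
      = ((univ : Finset (Fin k)).map ⟨fun j => (x.1, j), fun a b h => by
          simpa using h⟩).erase x := by
  ext y
  simp only [mem_neighborFinset, uc_adj, mem_erase, Finset.mem_map, mem_univ, true_and,
    Function.Embedding.coeFn_mk]
  constructor
  · rintro ⟨h, h2⟩; exact ⟨h.symm, y.2, by rw [h2]; rfl⟩
  · rintro ⟨h, j, hj⟩; exact ⟨h.symm, by rw [← hj]; rfl⟩

lemma uc_degree {m k : ℕ} (x : Fin m × Fin k) :
    (unionComplete m k).degree x = k - 1 := by
  rw [← card_neighborFinset_eq_degree, uc_nbr, card_erase_of_mem, card_map, card_univ,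
    Fintype.card_fin]
  simp only [Finset.mem_map, mem_univ, true_and, Function.Embedding.coeFn_mk]
  exact ⟨x.2, rfl⟩

lemma uc_P {m : ℕ} : ∀ x y : Fin m × Fin 4, x ≠ y → ¬ (unionComplete m 4).Adj x y →
    5 ≤ #((unionComplete m 4).neighborFinset x ∪ (unionComplete m 4).neighborFinset y) := by
  intro x y hxy hnadj
  have hblk : x.1 ≠ y.1 := by
    intro h; exact hnadj ((uc_adj x y).mpr ⟨hxy, h⟩)
  have hdisj : Disjoint ((unionComplete m 4).neighborFinset x)
      ((unionComplete m 4).neighborFinset y) := by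
    rw [Finset.disjoint_left]
    intro z hz hz'
    rw [mem_neighborFinset, uc_adj] at hz hz'
    exact hblk (hz.2.trans hz'.2.symm)
  rw [card_union_of_disjoint hdisj, card_neighborFinset_eq_degree,
    card_neighborFinset_eq_degree, uc_degree, uc_degree]
  omega


section SumLemmas

variable {α β : Type*} [Fintype α] [Fintype β] [DecidableEq α] [DecidableEq β]
  (A : SimpleGraph α) (B : SimpleGraph β) [DecidableRel A.Adj] [DecidableRel B.Adj]

instance sumDecidable : DecidableRel (A ⊕g B).Adj := fun u v =>
  match u, v with
  | Sum.inl a, Sum.inl a' => decidable_of_iff (A.Adj a a') (by simp)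
  | Sum.inl _, Sum.inr _ => isFalse (by simp)
  | Sum.inr _, Sum.inl _ => isFalse (by simp)
  | Sum.inr b, Sum.inr b' => decidable_of_iff (B.Adj b b') (by simp)

lemma nbr_inl (a : α) : (A ⊕g B).neighborFinset (Sum.inl a)
    = (A.neighborFinset a).map ⟨Sum.inl, Sum.inl_injective⟩ := by
  ext w
  cases w <;> simp [mem_neighborFinset]

lemma nbr_inr (b : β) : (A ⊕g B).neighborFinset (Sum.inr b)
    = (B.neighborFinset b).map ⟨Sum.inr, Sum.inr_injective⟩ := by
  ext w
  cases w <;> simp [mem_neighborFinset]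

lemma deg_inl (a : α) : (A ⊕g B).degree (Sum.inl a) = A.degree a := by
  rw [← card_neighborFinset_eq_degree, nbr_inl, card_map, card_neighborFinset_eq_degree]

lemma deg_inr (b : β) : (A ⊕g B).degree (Sum.inr b) = B.degree b := by
  rw [← card_neighborFinset_eq_degree, nbr_inr, card_map, card_neighborFinset_eq_degree]

lemma P_sum (dA dB : ℕ) (hA : ∀ a, dA ≤ A.degree a) (hB : ∀ b, dB ≤ B.degree b)
    (h5 : 5 ≤ dA + dB)
    (pA : ∀ x y, x ≠ y → ¬A.Adj x y → 5 ≤ #(A.neighborFinset x ∪ A.neighborFinset y))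
    (pB : ∀ x y, x ≠ y → ¬B.Adj x y → 5 ≤ #(B.neighborFinset x ∪ B.neighborFinset y)) :
    ∀ x y, x ≠ y → ¬(A ⊕g B).Adj x y →
      5 ≤ #((A ⊕g B).neighborFinset x ∪ (A ⊕g B).neighborFinset y) := by
  have hcross : ∀ (a : α) (b : β),
      5 ≤ #((A ⊕g B).neighborFinset (Sum.inl a) ∪ (A ⊕g B).neighborFinset (Sum.inr b)) := by
    intro a b
    rw [nbr_inl, nbr_inr, card_union_of_disjoint]
    · rw [card_map, card_map, card_neighborFinset_eq_degree, card_neighborFinset_eq_degree]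
      calc 5 ≤ dA + dB := h5
      _ ≤ _ := Nat.add_le_add (hA a) (hB b)
    · rw [Finset.disjoint_left]
      rintro z hz hz'
      simp only [Finset.mem_map, Function.Embedding.coeFn_mk] at hz hz'
      obtain ⟨_, _, rfl⟩ := hz
      obtain ⟨_, _, h⟩ := hz'
      simp at h
  rintro (a | b) (a' | b') hxy hnadj
  · rw [nbr_inl, nbr_inl, ← Finset.map_union, card_map]
    exact pA a a' (fun h => hxy (by rw [h])) (fun h => hnadj (by simpa using h))
  · exact hcross a b'
  · rw [Finset.union_comm]; exact hcross a' b
  · rw [nbr_inr, nbr_inr, ← Finset.map_union, card_map]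
    exact pB b b' (fun h => hxy (by rw [h])) (fun h => hnadj (by simpa using h))

lemma degsum_sum : ∑ v, (A ⊕g B).degree v = ∑ a, A.degree a + ∑ b, B.degree b := by
  rw [Fintype.sum_sum_type]
  congr 1 <;> [exact Fintype.sum_congr _ _ (deg_inl A B); exact Fintype.sum_congr _ _ (deg_inr A B)]

end SumLemmas


def petList : List (ℕ × ℕ) :=
  [(0,1),(1,2),(2,3),(3,4),(4,0),(0,5),(1,6),(2,7),(3,8),(4,9),(5,7),(7,9),(9,6),(6,8),(8,5)]

def pet : SimpleGraph (Fin 10) :=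
  SimpleGraph.fromRel fun a b => (a.val, b.val) ∈ petList

instance : DecidableRel pet.Adj := fun a b =>
  decidable_of_iff _ (SimpleGraph.fromRel_adj _ a b).symm


lemma pet_degree : ∀ v, pet.degree v = 3 := by decide

lemma pet_P : ∀ x y, x ≠ y → ¬ pet.Adj x y →
    5 ≤ #(pet.neighborFinset x ∪ pet.neighborFinset y) := by decide


lemma construct {V : Type} [Fintype V] [DecidableEq V] (p : ℕ) (hp : 5 ≤ p) (hodd : Odd p)
    (H : SimpleGraph V) [DecidableRel H.Adj]
    (hcard : Fintype.card V = p + 6)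
    (hsum : ∑ v, H.degree v = 3 * (p + 5))
    (hP : ∀ x y, x ≠ y → ¬H.Adj x y → 5 ≤ #(H.neighborFinset x ∪ H.neighborFinset y)) :
    ∃ G : SimpleGraph (Fin (p + 6)), ¬ G.ContainsBook p ∧
      G.edgeSet.ncard = (p + 3) * (p + 5) / 2 := by
  classical
  have e : Fin (p + 6) ≃ V := (Fintype.equivFinOfCardEq hcard).symm
  refine ⟨Hᶜ.comap e.toEmbedding, ?_, ?_⟩
  · -- no book
    rintro ⟨x, y, hadj, hle⟩
    rw [comap_adj] at hadj
    set a := e.toEmbedding x with ha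
    set b := e.toEmbedding y with hb
    have hab : a ≠ b := hadj.ne
    have hnadj : ¬H.Adj a b := ((compl_adj H a b).mp hadj).2
    -- common neighbors bound
    have hpre : (Hᶜ.comap e.toEmbedding).commonNeighbors x y
        = e.toEmbedding ⁻¹' (Hᶜ.commonNeighbors a b) := by
      ext z
      simp [commonNeighbors, mem_neighborSet, comap_adj, ha, hb]
    have hncard : ((Hᶜ.comap e.toEmbedding).commonNeighbors x y).ncard
        = (Hᶜ.commonNeighbors a b).ncard := by
      rw [hpre]
      apply Set.ncard_preimage_of_injective_subset_range e.injective
      rw [Equiv.range_eq_univ]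
      exact Set.subset_univ _
    set N := H.neighborFinset a ∪ H.neighborFinset b with hN
    have haN : a ∉ N := by
      simp only [hN, Finset.mem_union, mem_neighborFinset]
      push_neg
      exact ⟨H.irrefl, fun h => hnadj h.symm⟩
    have hbN : b ∉ N := by
      simp only [hN, Finset.mem_union, mem_neighborFinset]
      push_neg
      exact ⟨fun h => hnadj h, H.irrefl⟩
    set D := insert a (insert b N) with hD
    have hDcard : 7 ≤ #D := by
      rw [hD, card_insert_of_notMem (by simp [haN, hab]), card_insert_of_notMem hbN]
      have h5 := hP a b hab hnadj
      rw [← hN] at h5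
      omega
    have hsub : (Hᶜ.commonNeighbors a b).toFinset ⊆ univ \ D := by
      intro z hz
      rw [Set.mem_toFinset] at hz
      obtain ⟨hz1, hz2⟩ := hz
      rw [mem_neighborSet, compl_adj] at hz1 hz2
      simp only [mem_sdiff, mem_univ, true_and, hD, mem_insert, hN, Finset.mem_union,
        mem_neighborFinset]
      push_neg
      exact ⟨fun h => hz1.1 h.symm, fun h => hz2.1 h.symm,
        fun h => hz1.2 h, fun h => hz2.2 h⟩
    have hClt : (Hᶜ.commonNeighbors a b).ncard ≤ p - 1 := by
      rw [Set.ncard_eq_toFinset_card']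
      have := card_le_card hsub
      rw [card_sdiff_of_subset (Finset.subset_univ D), card_univ, hcard] at this
      omega
    rw [hncard] at hle
    omega
  · -- edge count
    have hiso : #(Hᶜ.comap e.toEmbedding).edgeFinset = #Hᶜ.edgeFinset :=
      (SimpleGraph.Iso.comap e Hᶜ).card_edgeFinset_eq
    have hhs : ∑ v, H.degree v = 2 * #H.edgeFinset := sum_degrees_eq_twice_card_edges H
    have hcompl := card_edge_compl H
    rw [hcard, Nat.choose_two_right] at hcompl
    obtain ⟨k, hk⟩ := hodd
    set t := k + 3 with ht
    have hp5 : p + 5 = 2 * t := by omega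
    have e1 : (p + 6) * (p + 6 - 1) / 2 = (p + 6) * t := by
      rw [show p + 6 - 1 = p + 5 from rfl, hp5,
        show (p+6) * (2*t) = 2 * ((p+6)*t) by ring, Nat.mul_div_cancel_left _ two_pos]
    have e2 : (p + 3) * (p + 5) / 2 = (p + 3) * t := by
      rw [hp5, show (p+3) * (2*t) = 2 * ((p+3)*t) by ring, Nat.mul_div_cancel_left _ two_pos]
    have e3 : (p + 6) * t = (p + 3) * t + 3 * t := by ring
    rw [ncard_edgeSet, hiso, e2]
    rw [e1] at hcompl
    omega


lemma K3_deg : ∀ v : Fin 3, (⊤ : SimpleGraph (Fin 3)).degree v = 2 := by decide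
lemma K3_P : ∀ x y : Fin 3, x ≠ y → ¬(⊤ : SimpleGraph (Fin 3)).Adj x y →
    5 ≤ #((⊤ : SimpleGraph (Fin 3)).neighborFinset x ∪
      (⊤ : SimpleGraph (Fin 3)).neighborFinset y) := by decide

lemma exist_extremal (p : ℕ) (hp : 5 ≤ p) (hodd : Odd p) :
    ∃ G : SimpleGraph (Fin (p + 6)), ¬ G.ContainsBook p ∧
      G.edgeSet.ncard = (p + 3) * (p + 5) / 2 := by
  have hmod : p % 4 = 1 ∨ p % 4 = 3 := by
    obtain ⟨k, hk⟩ := hodd; omega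
  rcases hmod with hmod | hmod
  · set a := (p + 3) / 4 with ha
    set B := unionComplete a 4 with hB
    set H := (⊤ : SimpleGraph (Fin 3)) ⊕g B with hH
    have hdegB : ∀ v, B.degree v = 3 := fun v => uc_degree v
    apply construct p hp hodd H
    · simp only [Fintype.card_sum, Fintype.card_prod, Fintype.card_fin]
      omega
    · refine Eq.trans (by congr! : _ = ∑ v, ((⊤ : SimpleGraph (Fin 3)) ⊕g B).degree v) ?_
      rw [degsum_sum]
      rw [Fintype.sum_congr _ _ K3_deg, Fintype.sum_congr _ _ hdegB]
      simp only [Finset.sum_const, card_univ, Fintype.card_fin, Fintype.card_prod,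
        smul_eq_mul]
      omega
    · convert P_sum _ _ 2 3 (fun v => (K3_deg v).ge) (fun v => (hdegB v).ge) (by omega) K3_P uc_P
  · set b := (p - 7) / 4 with hb
    set B := pet ⊕g unionComplete b 4 with hB
    set H := (⊤ : SimpleGraph (Fin 3)) ⊕g B with hH
    have hdegB : ∀ v, B.degree v = 3 := by
      rintro (v | v)
      · rw [deg_inl]; exact pet_degree v
      · rw [deg_inr]; exact uc_degree v
    have hPB : ∀ x y, x ≠ y → ¬B.Adj x y →
        5 ≤ #(B.neighborFinset x ∪ B.neighborFinset y) :=
      P_sum _ _ 3 3 (fun v => (pet_degree v).ge) (fun v => (uc_degree v).ge)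
        (by omega) pet_P uc_P
    apply construct p hp hodd H
    · simp only [Fintype.card_sum, Fintype.card_prod, Fintype.card_fin]
      omega
    · refine Eq.trans (by convert degsum_sum (⊤ : SimpleGraph (Fin 3)) B : _ = ∑ a, (⊤ : SimpleGraph (Fin 3)).degree a + ∑ b, B.degree b) ?_
      rw [Fintype.sum_congr _ _ K3_deg, Fintype.sum_congr _ _ hdegB]
      simp only [Finset.sum_const, card_univ, Fintype.card_fin, Fintype.card_sum,
        Fintype.card_prod, smul_eq_mul]
      omega
    · convert P_sum (⊤ : SimpleGraph (Fin 3)) B 2 3 (fun v => (K3_deg v).ge) (fun v => by convert Nat.le_of_eq (hdegB v).symm) (by omega) K3_P (by convert hPB)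

theorem stmt19 (p : ℕ) (hp : 5 ≤ p) (hodd : Odd p) :
    bookTuranNumber (p + 6) p = (p + 3) * (p + 5) / 2 := by
  apply IsGreatest.csSup_eq
  constructor
  · exact exist_extremal p hp hodd
  · rintro e ⟨G, hG, hE⟩
    rw [← hE]
    exact upper_bound p hp hodd G hG
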